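/- For K > 0 and constants A ≥ 0, E > 0, define L(M) = (1/2)log₂(1 + K(E·M² − A)²) for M large enough that E·M² > A, and U(M) = (1/2)log₂(1 + K(E·M² + A + B·M)²) for B ≥ 0. Then U(M) − L(M) → 0 as M → ∞. -/

import Mathlib

open Filter Real

theorem stmt_18 (K A E B : ℝ) (hK : 0 < K) (hA : 0 ≤ A) (hE : 0 < E) (hB : 0 ≤ B) :
    Filter.Tendsto (fun M : ℕ =>
      ((1:ℝ)/2) * Real.logb 2 (1 + K * (E * (M:ℝ)^2 + A + B * (M:ℝ))^2)
        - ((1:ℝ)/2) * Real.logb 2 (1 + K * (E * (M:ℝ)^2 - A)^2))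
      Filter.atTop (nhds 0) := by
  set F : ℕ → ℝ := fun M => 1 + K * (E * (M:ℝ)^2 + A + B * (M:ℝ))^2 with hF
  set G : ℕ → ℝ := fun M => 1 + K * (E * (M:ℝ)^2 - A)^2 with hG
  have hFpos : ∀ M, 0 < F M := fun M => by
    have := mul_nonneg hK.le (sq_nonneg (E * (M:ℝ)^2 + A + B * (M:ℝ)))
    simp only [hF]; linarith
  have hGpos : ∀ M, 0 < G M := fun M => by
    have := mul_nonneg hK.le (sq_nonneg (E * (M:ℝ)^2 - A))
    simp only [hG]; linarith
  -- the ratio tends to 1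
  have hinv : Tendsto (fun M : ℕ => ((M:ℝ))⁻¹) atTop (nhds 0) :=
    tendsto_inv_atTop_zero.comp tendsto_natCast_atTop_atTop
  have hnum : Tendsto (fun M : ℕ =>
      ((M:ℝ)⁻¹)^4 + K * (E + A * ((M:ℝ)⁻¹)^2 + B * (M:ℝ)⁻¹)^2) atTop
      (nhds (K * E^2)) := by
    have : Tendsto (fun M : ℕ =>
        ((M:ℝ)⁻¹)^4 + K * (E + A * ((M:ℝ)⁻¹)^2 + B * (M:ℝ)⁻¹)^2) atTop
        (nhds (0^4 + K * (E + A * 0^2 + B * 0)^2)) := by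
      apply Tendsto.add (hinv.pow 4)
      exact (((tendsto_const_nhds.add ((hinv.pow 2).const_mul A)).add
        (hinv.const_mul B)).pow 2).const_mul K
    simpa using this
  have hden : Tendsto (fun M : ℕ =>
      ((M:ℝ)⁻¹)^4 + K * (E - A * ((M:ℝ)⁻¹)^2)^2) atTop (nhds (K * E^2)) := by
    have : Tendsto (fun M : ℕ =>
        ((M:ℝ)⁻¹)^4 + K * (E - A * ((M:ℝ)⁻¹)^2)^2) atTop
        (nhds (0^4 + K * (E - A * 0^2)^2)) := by
      apply Tendsto.add (hinv.pow 4)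
      exact ((tendsto_const_nhds.sub ((hinv.pow 2).const_mul A)).pow 2).const_mul K
    simpa using this
  have hKE : K * E^2 ≠ 0 := by positivity
  have hratio : Tendsto (fun M : ℕ => F M / G M) atTop (nhds 1) := by
    have h := hnum.div hden hKE
    rw [div_self hKE] at h
    apply h.congr'
    filter_upwards [eventually_ge_atTop 1] with M hM
    have hM0 : (M:ℝ) ≠ 0 := by
      have : (1:ℝ) ≤ (M:ℝ) := by exact_mod_cast hM
      linarith
    simp only [hF, hG, Pi.div_apply]
    field_simp
  -- conclude
  have hlog : Tendsto (fun M : ℕ => Real.log (F M / G M)) atTop (nhds 0) := by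
    have := ((Real.continuousAt_log one_ne_zero).tendsto).comp hratio
    rw [Real.log_one] at this
    exact this
  have := hlog.const_mul ((1:ℝ)/2 / Real.log 2)
  rw [mul_zero] at this
  apply this.congr
  intro M
  rw [Real.logb, Real.logb, Real.log_div (hFpos M).ne' (hGpos M).ne']
  ring
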